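/- The first difference of the factor complexity of the Thue-Morse word u_TM satisfies: ΔC(0) = 1; ΔC(n) = 4 if 2^k < n ≤ 3·2^{k−1} for some k ≥ 1; and ΔC(n) = 2 otherwise. -/

import Mathlib

open scoped Classical

/-- The finite word `w` occurs in the infinite word `u` at position `i`. -/
def OccursAt {A : Type*} (u : ℕ → A) (w : List A) (i : ℕ) : Prop :=
  w = (List.range w.length).map fun k => u (i + k)

/-- The finite word `w` is a factor of the infinite word `u`. -/
def IsFactor {A : Type*} (u : ℕ → A) (w : List A) : Prop :=
  ∃ i, OccursAt u w i

/-- The (involutive) antimorphism of `A*` induced by the letter map `θ`: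
it reverses a word and applies `θ` letterwise. -/
def antim {A : Type*} (θ : A → A) (w : List A) : List A :=
  (w.map θ).reverse

/-- `w` is a `θ`-palindrome, i.e. a fixed point of the antimorphism induced by `θ`. -/
def IsPalin {A : Type*} (θ : A → A) (w : List A) : Prop :=
  antim θ w = w

/-- Factor complexity of the infinite word `u`. -/
noncomputable def fC {A : Type*} (u : ℕ → A) (n : ℕ) : ℕ :=
  Set.ncard {w : List A | w.length = n ∧ IsFactor u w}

/-- `θ`-palindromic complexity of the infinite word `u`. -/
noncomputable def fP {A : Type*} (u : ℕ → A) (θ : A → A) (n : ℕ) : ℕ :=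
  Set.ncard {w : List A | w.length = n ∧ IsFactor u w ∧ IsPalin θ w}

/-- `γ_Θ(w)`: the number of pairs `{a, θ a}` with `a` occurring in `w` and `a ≠ θ a`. -/
noncomputable def gammaTheta {A : Type*} (θ : A → A) (w : List A) : ℕ :=
  Set.ncard {s : Set A | ∃ a ∈ w, θ a ≠ a ∧ s = {a, θ a}}

/-- The set of `θ`-palindromic factors of the finite word `w`. -/
def palFactors {A : Type*} (θ : A → A) (w : List A) : Set (List A) :=
  {p | p <:+: w ∧ IsPalin θ p}

/-- The `Θ`-defect of a finite word `w`. -/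
noncomputable def defect {A : Type*} (θ : A → A) (w : List A) : ℤ :=
  (w.length : ℤ) + 1 - gammaTheta θ w - Set.ncard (palFactors θ w)

/-- The number of occurrences of `w` in the finite word `v`. -/
noncomputable def numOcc {A : Type*} (w v : List A) : ℕ :=
  Set.ncard {i : ℕ | i + w.length ≤ v.length ∧ w <+: v.drop i}

/-- The Thue-Morse word over `{0,1}` (`false = 0`, `true = 1`): its `n`-th letter is
the parity of the sum of binary digits of `n`. -/
def tm : ℕ → Bool := fun n => (Nat.digits 2 n).sum % 2 == 1


lemma tm_even (n : ℕ) : tm (2 * n) = tm n := by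
  rcases Nat.eq_zero_or_pos n with h | h
  · subst h; rfl
  · unfold tm
    rw [Nat.digits_def' (by norm_num : 1 < 2) (by omega)]
    have h1 : (2 * n) % 2 = 0 := by omega
    have h2 : (2 * n) / 2 = n := by omega
    rw [h1, h2, List.sum_cons, Nat.zero_add]
lemma tm_odd (n : ℕ) : tm (2 * n + 1) = !tm n := by
  unfold tm
  rw [Nat.digits_def' (by norm_num : 1 < 2) (by omega)]
  have h1 : (2 * n + 1) % 2 = 1 := by omega
  have h2 : (2 * n + 1) / 2 = n := by omega
  rw [h1, h2, List.sum_cons]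
  rcases Nat.even_or_odd ((Nat.digits 2 n).sum) with ⟨c,hc⟩ | ⟨c,hc⟩ <;>
    · rw [hc]
      have e1 : (1 + (c + c)) % 2 = 1 := by omega
      have e2 : (c + c) % 2 = 0 := by omega
      have e3 : (1 + (2*c+1)) % 2 = 0 := by omega
      have e4 : (2*c+1) % 2 = 1 := by omega
      simp [e1, e2, e3, e4]

lemma tm_pair (n : ℕ) : tm (2 * n + 1) = !tm (2 * n) := by rw [tm_odd, tm_even]

lemma noConst3 (j : ℕ) (h1 : tm (j+1) = tm j) (h2 : tm (j+2) = tm (j+1)) : False := by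
  rcases Nat.even_or_odd j with ⟨m, hm⟩ | ⟨m, hm⟩
  · have : j + 1 = 2 * m + 1 := by omega
    rw [this] at h1
    have : j = 2 * m := by omega
    rw [this] at h1
    rw [tm_pair] at h1
    exact absurd h1 (by cases tm (2*m) <;> simp)
  · have e1 : j + 1 = 2 * (m+1) := by omega
    have e2 : j + 2 = 2 * (m+1) + 1 := by omega
    rw [e1] at h2; rw [e2, tm_pair] at h2
    exact absurd h2 (by cases tm (2*(m+1)) <;> simp)

lemma noAlt5 (j : ℕ) (h : ∀ t < 4, tm (j + t + 1) = !tm (j + t)) : False := by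
  rcases Nat.even_or_odd j with ⟨m, hm⟩ | ⟨m, hm⟩
  · -- j = 2m : use pairs (1,2) and (3,4)
    have h2 := h 1 (by omega)
    have h4 := h 3 (by omega)
    have e1 : j + 1 + 1 = 2 * (m+1) := by omega
    have e2 : j + 1 = 2 * m + 1 := by omega
    rw [e1, e2, tm_even, tm_odd] at h2
    have e3 : j + 3 + 1 = 2 * (m+2) := by omega
    have e4 : j + 3 = 2 * (m+1) + 1 := by omega
    rw [e3, e4, tm_even, tm_odd] at h4
    simp at h2 h4
    exact noConst3 m h2 h4
  · -- j = 2m+1 : use pairs (0,1) and (2,3)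
    have h1 := h 0 (by omega)
    have h3 := h 2 (by omega)
    have e1 : j + 0 + 1 = 2 * (m+1) := by omega
    have e2 : j + 0 = 2 * m + 1 := by omega
    rw [e1, e2, tm_even, tm_odd] at h1
    have e3 : j + 2 + 1 = 2 * (m+2) := by omega
    have e4 : j + 2 = 2 * (m+1) + 1 := by omega
    rw [e3, e4, tm_even, tm_odd] at h3
    simp at h1 h3
    exact noConst3 m h1 h3

def wnd (i n : ℕ) : List Bool := (List.range n).map fun k => tm (i + k)

@[simp] lemma wnd_length (i n : ℕ) : (wnd i n).length = n := by simp [wnd]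

lemma wnd_getElem? (i n k : ℕ) :
    (wnd i n)[k]? = if k < n then some (tm (i + k)) else none := by
  by_cases h : k < n <;> simp [wnd, h] <;> omega

def phi (w : List Bool) : List Bool := w.flatMap fun a => [a, !a]

@[simp] lemma phi_nil : phi [] = [] := rfl
@[simp] lemma phi_cons (a : Bool) (w : List Bool) : phi (a :: w) = a :: (!a) :: phi w := rfl

@[simp] lemma phi_length (w : List Bool) : (phi w).length = 2 * w.length := by
  induction w with
  | nil => rfl
  | cons a w ih => simp [ih]; omega

lemma phi_getElem?_even (w : List Bool) (m : ℕ) : (phi w)[2 * m]? = w[m]? := by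
  induction w generalizing m with
  | nil => simp
  | cons a w ih =>
    rcases m with _ | m
    · simp
    · have h2 : 2 * (m + 1) = (2 * m) + 1 + 1 := by omega
      rw [h2]
      simpa using ih m

lemma phi_getElem?_odd (w : List Bool) (m : ℕ) :
    (phi w)[2 * m + 1]? = w[m]?.map (fun a => !a) := by
  induction w generalizing m with
  | nil => simp
  | cons a w ih =>
    rcases m with _ | m
    · simp
    · have h2 : 2 * (m + 1) + 1 = (2 * m + 1) + 1 + 1 := by omega
      rw [h2]
      simpa using ih m

lemma phi_wnd (j m : ℕ) : phi (wnd j m) = wnd (2 * j) (2 * m) := by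
  apply List.ext_getElem?
  intro k
  rcases Nat.even_or_odd k with ⟨s, hs⟩ | ⟨s, hs⟩
  · have : k = 2 * s := by omega
    subst this
    rw [phi_getElem?_even, wnd_getElem?, wnd_getElem?]
    by_cases h : s < m
    · rw [if_pos h, if_pos (by omega)]
      have : 2 * j + 2 * s = 2 * (j + s) := by omega
      rw [this, tm_even]
    · rw [if_neg h, if_neg (by omega)]
  · have : k = 2 * s + 1 := by omega
    subst this
    rw [phi_getElem?_odd, wnd_getElem?, wnd_getElem?]
    by_cases h : s < m
    · rw [if_pos h, if_pos (by omega)]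
      have : 2 * j + (2 * s + 1) = 2 * (j + s) + 1 := by omega
      rw [this, tm_odd]
      rfl
    · rw [if_neg h, if_neg (by omega)]
      rfl

lemma wnd_take (i : ℕ) {m n : ℕ} (h : m ≤ n) : (wnd i n).take m = wnd i m := by
  apply List.ext_getElem?
  intro k
  rw [List.getElem?_take]
  by_cases hk : k < m
  · rw [if_pos hk, wnd_getElem?, wnd_getElem?, if_pos hk, if_pos (by omega)]
  · rw [if_neg hk, wnd_getElem?, if_neg hk]

lemma wnd_drop (i m n : ℕ) : (wnd i n).drop m = wnd (i + m) (n - m) := by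
  apply List.ext_getElem?
  intro k
  rw [List.getElem?_drop, wnd_getElem?, wnd_getElem?]
  by_cases hk : k < n - m
  · have h1 : m + k < n := by omega
    have h3 : i + (m + k) = i + m + k := by omega
    rw [if_pos h1, if_pos hk, h3]
  · have h2 : ¬ (m + k < n) := by omega
    rw [if_neg h2, if_neg hk]

lemma wnd_eq_tm (i i' L : ℕ) (h : wnd i L = wnd i' L) :
    ∀ t < L, tm (i + t) = tm (i' + t) := by
  intro t ht
  have := congrArg (fun l => l[t]?) h
  simp only [wnd_getElem?, if_pos ht] at this
  exact Option.some_injective _ this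

lemma even_odd_contra (a b : ℕ) (h : ∀ t < 4, tm (2*a + t) = tm (2*b + 1 + t)) : False := by
  apply noAlt5 (2*b)
  intro t ht
  rcases Nat.even_or_odd t with ⟨s, hs⟩ | ⟨s, hs⟩
  · have e1 : 2*b + t + 1 = 2 * (b + s) + 1 := by omega
    have e2 : 2*b + t = 2 * (b + s) := by omega
    rw [e1, e2, tm_pair]
  · have e1 : 2*b + t + 1 = 2*b + 1 + (2*s + 1) := by omega
    have e2 : 2*b + t = 2*b + 1 + (2*s) := by omega
    rw [e1, e2, ← h (2*s+1) (by omega), ← h (2*s) (by omega)]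
    have e3 : 2*a + (2*s + 1) = 2 * (a + s) + 1 := by omega
    have e4 : 2*a + (2*s) = 2 * (a + s) := by omega
    rw [e3, e4, tm_pair]

lemma wnd_parity_ne (a b L : ℕ) (hL : 4 ≤ L) : wnd (2*a) L ≠ wnd (2*b+1) L := by
  intro h
  exact even_odd_contra a b fun t ht => wnd_eq_tm _ _ _ h t (by omega)

def Lset (n : ℕ) : Set (List Bool) := Set.range fun i => wnd i n

lemma Lset_finite (n : ℕ) : (Lset n).Finite := by
  apply Set.Finite.subset (List.finite_length_eq (α := Bool) (n := n))
  rintro w ⟨i, rfl⟩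
  exact wnd_length i n

lemma fC_eq (n : ℕ) : fC tm n = (Lset n).ncard := by
  unfold fC
  congr 1
  ext w
  constructor
  · rintro ⟨hl, i, hocc⟩
    refine ⟨i, ?_⟩
    show wnd i n = _
    rw [hocc]
    unfold wnd
    rw [hl]
  · rintro ⟨i, rfl⟩
    exact ⟨wnd_length i n, i, by simp [OccursAt, wnd]⟩


-- decomposition of windows by parity of position
lemma wnd_even_even (j n : ℕ) : wnd (2*j) (2*n) = phi (wnd j n) := (phi_wnd j n).symm

lemma wnd_even_odd (j n : ℕ) : wnd (2*j) (2*n+1) = (phi (wnd j (n+1))).take (2*n+1) := by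
  rw [phi_wnd]
  have : 2 * (n+1) = 2*n+2 := by omega
  rw [this, wnd_take _ (by omega)]

lemma wnd_odd_odd (j n : ℕ) : wnd (2*j+1) (2*n+1) = (phi (wnd j (n+1))).drop 1 := by
  rw [phi_wnd, wnd_drop]
  congr 1 <;> omega

lemma wnd_odd_even (j n : ℕ) : wnd (2*j+1) (2*n) = ((phi (wnd j (n+1))).drop 1).take (2*n) := by
  rw [phi_wnd, wnd_drop]
  have h1 : 2 * (n+1) - 1 = 2*n+1 := by omega
  rw [h1, wnd_take _ (by omega)]

lemma Lset_mem (w : List Bool) (n : ℕ) (hw : w ∈ Lset n) : ∃ j, w = wnd j n := by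
  rcases hw with ⟨j, rfl⟩; exact ⟨j, rfl⟩

lemma Lset_odd_eq (n : ℕ) : Lset (2*n+1) =
    ((fun v => (phi v).take (2*n+1)) '' Lset (n+1)) ∪ ((fun v => (phi v).drop 1) '' Lset (n+1)) := by
  ext w
  constructor
  · rintro ⟨i, rfl⟩
    rcases Nat.even_or_odd i with ⟨j, hj⟩ | ⟨j, hj⟩
    · left
      refine ⟨wnd j (n+1), ⟨j, rfl⟩, ?_⟩
      have : i = 2*j := by omega
      rw [this]
      exact (wnd_even_odd j n).symm
    · right
      refine ⟨wnd j (n+1), ⟨j, rfl⟩, ?_⟩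
      have : i = 2*j+1 := by omega
      rw [this]
      exact (wnd_odd_odd j n).symm
  · rintro (⟨v, ⟨j, rfl⟩, rfl⟩ | ⟨v, ⟨j, rfl⟩, rfl⟩)
    · exact ⟨2*j, (wnd_even_odd j n)⟩
    · exact ⟨2*j+1, (wnd_odd_odd j n)⟩

lemma Lset_even_eq (n : ℕ) : Lset (2*n) =
    (phi '' Lset n) ∪ ((fun v => ((phi v).drop 1).take (2*n)) '' Lset (n+1)) := by
  ext w
  constructor
  · rintro ⟨i, rfl⟩
    rcases Nat.even_or_odd i with ⟨j, hj⟩ | ⟨j, hj⟩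
    · left
      refine ⟨wnd j n, ⟨j, rfl⟩, ?_⟩
      have : i = 2*j := by omega
      rw [this]
      exact (wnd_even_even j n).symm
    · right
      refine ⟨wnd j (n+1), ⟨j, rfl⟩, ?_⟩
      have : i = 2*j+1 := by omega
      rw [this]
      exact (wnd_odd_even j n).symm
  · rintro (⟨v, ⟨j, rfl⟩, rfl⟩ | ⟨v, ⟨j, rfl⟩, rfl⟩)
    · exact ⟨2*j, (wnd_even_even j n)⟩
    · exact ⟨2*j+1, (wnd_odd_even j n)⟩


lemma wnd_ext (j j' L : ℕ) (h : ∀ k < L, tm (j+k) = tm (j'+k)) : wnd j L = wnd j' L := by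
  apply List.ext_getElem?
  intro k
  rw [wnd_getElem?, wnd_getElem?]
  by_cases hk : k < L
  · rw [if_pos hk, if_pos hk, h k hk]
  · rw [if_neg hk, if_neg hk]

lemma inj_phi (n : ℕ) : Set.InjOn phi (Lset n) := by
  rintro v ⟨j, rfl⟩ w ⟨j', rfl⟩ h
  rw [← wnd_even_even, ← wnd_even_even] at h
  have ht := wnd_eq_tm _ _ _ h
  apply wnd_ext
  intro k hk
  have := ht (2*k) (by omega)
  have e1 : 2*j + 2*k = 2*(j+k) := by omega
  have e2 : 2*j' + 2*k = 2*(j'+k) := by omega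
  rw [e1, e2, tm_even, tm_even] at this
  exact this

lemma inj_fE (n : ℕ) : Set.InjOn (fun v => (phi v).take (2*n+1)) (Lset (n+1)) := by
  rintro v ⟨j, rfl⟩ w ⟨j', rfl⟩ h
  simp only [← wnd_even_odd] at h
  have ht := wnd_eq_tm _ _ _ h
  apply wnd_ext
  intro k hk
  have := ht (2*k) (by omega)
  have e1 : 2*j + 2*k = 2*(j+k) := by omega
  have e2 : 2*j' + 2*k = 2*(j'+k) := by omega
  rw [e1, e2, tm_even, tm_even] at this
  exact this

lemma odd_shift_ext (j j' L M : ℕ) (hM : 2*L ≤ M) (hM0 : 1 ≤ M)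
    (ht : ∀ t < M, tm (2*j+1+t) = tm (2*j'+1+t)) : wnd j (L+1) = wnd j' (L+1) := by
  apply wnd_ext
  intro k hk
  rcases Nat.eq_zero_or_pos k with hk0 | hk0
  · subst hk0
    have := ht 0 (by omega)
    have e1 : 2*j+1+0 = 2*j+1 := by omega
    have e2 : 2*j'+1+0 = 2*j'+1 := by omega
    rw [e1, e2, tm_odd, tm_odd] at this
    simpa using this
  · have := ht (2*k-1) (by omega)
    have e1 : 2*j+1+(2*k-1) = 2*(j+k) := by omega
    have e2 : 2*j'+1+(2*k-1) = 2*(j'+k) := by omega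
    rw [e1, e2, tm_even, tm_even] at this
    simpa using this

lemma inj_fO (n : ℕ) : Set.InjOn (fun v => (phi v).drop 1) (Lset (n+1)) := by
  rintro v ⟨j, rfl⟩ w ⟨j', rfl⟩ h
  simp only [← wnd_odd_odd] at h
  exact odd_shift_ext j j' n (2*n+1) (by omega) (by omega) (wnd_eq_tm _ _ _ h)

lemma inj_fM (n : ℕ) (hn : 1 ≤ n) :
    Set.InjOn (fun v => ((phi v).drop 1).take (2*n)) (Lset (n+1)) := by
  rintro v ⟨j, rfl⟩ w ⟨j', rfl⟩ h
  simp only [← wnd_odd_even] at h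
  exact odd_shift_ext j j' n (2*n) (by omega) (by omega) (wnd_eq_tm _ _ _ h)



lemma fC_odd (n : ℕ) (hn : 2 ≤ n) : fC tm (2*n+1) = 2 * fC tm (n+1) := by
  rw [fC_eq, fC_eq, Lset_odd_eq]
  have hdisj : Disjoint ((fun v => (phi v).take (2*n+1)) '' Lset (n+1))
      ((fun v => (phi v).drop 1) '' Lset (n+1)) := by
    rw [Set.disjoint_left]
    rintro w ⟨v, ⟨j, rfl⟩, rfl⟩ ⟨v', ⟨j', rfl⟩, h2⟩
    simp only [← wnd_even_odd, ← wnd_odd_odd] at h2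
    exact wnd_parity_ne j j' (2*n+1) (by omega) h2.symm
  rw [Set.ncard_union_eq hdisj ((Lset_finite _).image _) ((Lset_finite _).image _),
    Set.ncard_image_of_injOn (inj_fE n), Set.ncard_image_of_injOn (inj_fO n)]
  ring

lemma fC_even (n : ℕ) (hn : 2 ≤ n) : fC tm (2*n) = fC tm n + fC tm (n+1) := by
  rw [fC_eq, fC_eq, fC_eq, Lset_even_eq]
  have hdisj : Disjoint (phi '' Lset n)
      ((fun v => ((phi v).drop 1).take (2*n)) '' Lset (n+1)) := by
    rw [Set.disjoint_left]
    rintro w ⟨v, ⟨j, rfl⟩, rfl⟩ ⟨v', ⟨j', rfl⟩, h2⟩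
    simp only [← wnd_odd_even] at h2
    simp only [← wnd_even_even] at h2
    exact wnd_parity_ne j j' (2*n) (by omega) h2.symm
  rw [Set.ncard_union_eq hdisj ((Lset_finite _).image _) ((Lset_finite _).image _),
    Set.ncard_image_of_injOn (inj_phi n), Set.ncard_image_of_injOn (inj_fM n (by omega))]


lemma tm0 : tm 0 = false := by simp [tm]
lemma tm1 : tm 1 = true := by simp [tm]
lemma tm2 : tm 2 = true := by simp [tm]
lemma tm3 : tm 3 = false := by simp [tm]
lemma tm4 : tm 4 = true := by simp [tm]
lemma tm5 : tm 5 = false := by simp [tm]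
lemma tm6 : tm 6 = false := by simp [tm]
lemma tm7 : tm 7 = true := by simp [tm]

lemma wnd1 (i : ℕ) : wnd i 1 = [tm i] := by simp [wnd, List.range_succ]
lemma wnd2 (i : ℕ) : wnd i 2 = [tm i, tm (i+1)] := by
  simp [wnd, List.range_succ]
lemma wnd3 (i : ℕ) : wnd i 3 = [tm i, tm (i+1), tm (i+2)] := by
  simp [wnd, List.range_succ]

lemma fC0 : fC tm 0 = 1 := by
  rw [fC_eq]
  have : Lset 0 = {([] : List Bool)} := by
    ext w
    constructor
    · rintro ⟨i, rfl⟩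
      rfl
    · rintro rfl
      exact ⟨0, rfl⟩
  rw [this, Set.ncard_singleton]

lemma fC1 : fC tm 1 = 2 := by
  rw [fC_eq]
  have : Lset 1 = {[false], [true]} := by
    ext w
    constructor
    · rintro ⟨i, rfl⟩
      show wnd i 1 ∈ _
      rw [wnd1]
      cases tm i <;> simp
    · rintro (rfl | rfl)
      · exact ⟨0, by show wnd 0 1 = _; rw [wnd1, tm0]⟩
      · exact ⟨1, by show wnd 1 1 = _; rw [wnd1, tm1]⟩
  rw [this]
  rw [Set.ncard_pair (by simp)]

lemma fC2 : fC tm 2 = 4 := by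
  rw [fC_eq]
  have : Lset 2 = {[false,false], [false,true], [true,false], [true,true]} := by
    ext w
    constructor
    · rintro ⟨i, rfl⟩
      show wnd i 2 ∈ _
      rw [wnd2]
      cases tm i <;> cases tm (i+1) <;> simp
    · rintro (rfl | rfl | rfl | rfl)
      · exact ⟨5, by show wnd 5 2 = _; rw [wnd2]; norm_num [tm5, tm6]⟩
      · exact ⟨0, by show wnd 0 2 = _; rw [wnd2]; norm_num [tm0, tm1]⟩
      · exact ⟨2, by show wnd 2 2 = _; rw [wnd2]; norm_num [tm2, tm3]⟩
      · exact ⟨1, by show wnd 1 2 = _; rw [wnd2]; norm_num [tm1, tm2]⟩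
  rw [this]
  have e : ({[false,false], [false,true], [true,false], [true,true]} : Set (List Bool))
      = (↑({[false,false], [false,true], [true,false], [true,true]} : Finset (List Bool))) := by
    simp
  rw [e, Set.ncard_coe_finset]
  decide

lemma fC3 : fC tm 3 = 6 := by
  rw [fC_eq]
  have : Lset 3 = {[false,false,true], [false,true,false], [false,true,true],
      [true,false,false], [true,false,true], [true,true,false]} := by
    ext w
    constructor
    · rintro ⟨i, rfl⟩
      show wnd i 3 ∈ _
      rw [wnd3]
      cases h0 : tm i <;> cases h1 : tm (i+1) <;> cases h2 : tm (i+2) <;> simp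
      · exact noConst3 i (h1.trans h0.symm) (h2.trans h1.symm)
      · exact noConst3 i (h1.trans h0.symm) (h2.trans h1.symm)
    · rintro (rfl | rfl | rfl | rfl | rfl | rfl)
      · exact ⟨5, by show wnd 5 3 = _; rw [wnd3]; norm_num [tm5, tm6, tm7]⟩
      · exact ⟨3, by show wnd 3 3 = _; rw [wnd3]; norm_num [tm3, tm4, tm5]⟩
      · exact ⟨0, by show wnd 0 3 = _; rw [wnd3]; norm_num [tm0, tm1, tm2]⟩
      · exact ⟨4, by show wnd 4 3 = _; rw [wnd3]; norm_num [tm4, tm5, tm6]⟩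
      · exact ⟨2, by show wnd 2 3 = _; rw [wnd3]; norm_num [tm2, tm3, tm4]⟩
      · exact ⟨1, by show wnd 1 3 = _; rw [wnd3]; norm_num [tm1, tm2, tm3]⟩
  rw [this]
  have e : ({[false,false,true], [false,true,false], [false,true,true],
      [true,false,false], [true,false,true], [true,true,false]} : Set (List Bool))
      = (↑({[false,false,true], [false,true,false], [false,true,true],
      [true,false,false], [true,false,true], [true,true,false]} : Finset (List Bool))) := by
    simp
  rw [e, Set.ncard_coe_finset]
  decide


lemma fC4 : fC tm 4 = 10 := by
  have h := fC_even 2 le_rfl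
  norm_num at h
  rw [h, fC2, fC3]

lemma fC5 : fC tm 5 = 12 := by
  have h := fC_odd 2 le_rfl
  norm_num at h
  rw [h, fC3]

def tmCond (n : ℕ) : Prop := ∃ k : ℕ, 1 ≤ k ∧ 2 ^ k < n ∧ n ≤ 3 * 2 ^ (k - 1)

lemma tmCond_small :
    ¬ tmCond 1 ∧ ¬ tmCond 2 ∧ tmCond 3 ∧ ¬ tmCond 4 := by
  refine ⟨?_, ?_, ⟨1, le_rfl, by norm_num⟩, ?_⟩ <;>
  · rintro ⟨k, hk1, hk2, hk3⟩
    match k, hk1 with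
    | 1, _ => simp only [pow_one, pow_zero] at hk2 hk3; omega
    | (k+2), _ =>
      have h4 : 2 ^ (k+2) = 4 * 2 ^ k := by ring
      have h1 : 1 ≤ 2 ^ k := Nat.one_le_two_pow
      omega

lemma tmCond_two_mul (m : ℕ) (hm : 1 ≤ m) : tmCond (2*m) ↔ tmCond m := by
  constructor
  · rintro ⟨k, hk1, hk2, hk3⟩
    match k, hk1 with
    | 1, _ => norm_num at hk2 hk3; omega
    | (k+2), _ =>
      refine ⟨k+1, by omega, ?_, ?_⟩
      · have h : 2 ^ (k+2) = 2 * 2 ^ (k+1) := by ring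
        omega
      · have h : 3 * 2 ^ (k+2-1) = 2 * (3 * 2 ^ (k+1-1)) := by
          norm_num
          ring
        omega
  · rintro ⟨k, hk1, hk2, hk3⟩
    refine ⟨k+1, by omega, ?_, ?_⟩
    · have h : 2 ^ (k+1) = 2 * 2 ^ k := by ring
      omega
    · have h : 3 * 2 ^ (k+1-1) = 2 * (3 * 2 ^ (k-1)) := by
        norm_num
        conv_lhs => rw [show k = (k-1)+1 by omega]
        ring
      omega

lemma tmCond_odd (m : ℕ) (hm : 2 ≤ m) : tmCond (2*m+1) ↔ tmCond (m+1) := by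
  constructor
  · rintro ⟨k, hk1, hk2, hk3⟩
    match k, hk1 with
    | 1, _ => norm_num at hk2 hk3; omega
    | (k+2), _ =>
      refine ⟨k+1, by omega, ?_, ?_⟩
      · have h : 2 ^ (k+2) = 2 * 2 ^ (k+1) := by ring
        omega
      · have h : 3 * 2 ^ (k+2-1) = 2 * (3 * 2 ^ (k+1-1)) := by
          norm_num
          ring
        -- 2m+1 ≤ 3*2^(k+1), RHS even
        have heven : ∃ c, 3 * 2 ^ (k+2-1) = 2 * c := ⟨3 * 2 ^ (k+1-1), h⟩
        omega
  · rintro ⟨k, hk1, hk2, hk3⟩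
    refine ⟨k+1, by omega, ?_, ?_⟩
    · have h : 2 ^ (k+1) = 2 * 2 ^ k := by ring
      omega
    · have h : 3 * 2 ^ (k+1-1) = 2 * (3 * 2 ^ (k-1)) := by
        norm_num
        conv_lhs => rw [show k = (k-1)+1 by omega]
        ring
      omega

lemma fC_main (n : ℕ) (hn : 1 ≤ n) :
    fC tm (n+1) = fC tm n + (if tmCond n then 4 else 2) := by
  induction n using Nat.strong_induction_on with
  | _ n ih =>
  match n, hn with
  | 1, _ => rw [if_neg tmCond_small.1, fC2, fC1]
  | 2, _ => rw [if_neg tmCond_small.2.1, fC3, fC2]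
  | 3, _ => rw [if_pos tmCond_small.2.2.1, fC4, fC3]
  | 4, _ => rw [if_neg tmCond_small.2.2.2, fC5, fC4]
  | (n+5), _ =>
    rcases Nat.even_or_odd (n+5) with ⟨m, hm⟩ | ⟨m, hm⟩
    · -- n + 5 = 2 * m, m ≥ 3
      have hm3 : 3 ≤ m := by omega
      have e1 : n + 5 = 2 * m := by omega
      have e2 : n + 5 + 1 = 2 * m + 1 := by omega
      rw [e1, fC_odd m (by omega), fC_even m (by omega),
        if_congr (tmCond_two_mul m (by omega)) rfl rfl]
      have ihm := ih m (by omega) (by omega)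
      omega
    · -- n + 5 = 2 * m + 1, m ≥ 2
      have hm2 : 2 ≤ m := by omega
      have e1 : n + 5 = 2 * m + 1 := by omega
      have e2 : n + 5 + 1 = 2 * (m + 1) := by omega
      rw [e1, show 2*m+1+1 = 2*(m+1) by ring, fC_even (m+1) (by omega), fC_odd m (by omega),
        if_congr (tmCond_odd m (by omega)) rfl rfl]
      have ihm := ih (m+1) (by omega) (by omega)
      omega

/-- The first difference of the factor complexity of the
Thue-Morse word: `ΔC(0) = 1`, `ΔC(n) = 4` if `2^k < n ≤ 3·2^(k−1)` for some `k ≥ 1`,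
and `ΔC(n) = 2` otherwise. -/
theorem thueMorse_factor_complexity_difference :
    (fC tm 1 : ℤ) - fC tm 0 = 1 ∧
    (∀ n k : ℕ, 1 ≤ k → 2 ^ k < n → n ≤ 3 * 2 ^ (k - 1) →
      (fC tm (n + 1) : ℤ) - fC tm n = 4) ∧
    (∀ n : ℕ, n ≠ 0 → (¬ ∃ k : ℕ, 1 ≤ k ∧ 2 ^ k < n ∧ n ≤ 3 * 2 ^ (k - 1)) →
      (fC tm (n + 1) : ℤ) - fC tm n = 2) := by
  refine ⟨?_, ?_, ?_⟩
  · rw [fC1, fC0]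
    norm_num
  · intro n k hk h1 h2
    have hc : tmCond n := ⟨k, hk, h1, h2⟩
    have hn : 1 ≤ n := by
      have : 1 ≤ 2 ^ k := Nat.one_le_two_pow
      omega
    have h := fC_main n hn
    rw [if_pos hc] at h
    rw [h]
    push_cast
    ring
  · intro n hn0 hnc
    have h := fC_main n (by omega)
    rw [if_neg (fun hc : tmCond n => hnc hc)] at h
    rw [h]
    push_cast
    ring
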